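/- Let A ∈ ℝ^{d×N}, y ∈ ℝ^d, λ > 0, and T ⊆ {1,…,N}. Suppose x* is a solution of min_x (1/2)‖y − A x‖₂² + λ‖x‖₁ subject to x_{T^c} = 0, and that ‖A_{T^c}^T (y − A x*)‖_∞ < λ. Then every optimal solution x̂ of the unconstrained problem min_x (1/2)‖y − A x‖₂² + λ‖x‖₁ satisfies x̂_{T^c} = 0. -/
import Mathlib


open Finset

/-- If `t * L + t^2 * Q ≤ 0` for all small positive `t`, then `L ≤ 0`. -/
lemma stmt0_aux_limit (L Q : ℝ) (h : ∀ t : ℝ, 0 < t → t < 1 → t * L + t^2 * Q ≤ 0) :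
    L ≤ 0 := by
  by_contra hL
  push_neg at hL
  have hQ1 : (0:ℝ) < 2 * (|Q| + 1) := by positivity
  set t : ℝ := min (1/2) (L / (2 * (|Q| + 1))) with ht
  have ht0 : 0 < t := lt_min (by norm_num) (div_pos hL hQ1)
  have ht1 : t < 1 := lt_of_le_of_lt (min_le_left _ _) (by norm_num)
  have htle : t ≤ L / (2 * (|Q| + 1)) := min_le_right _ _
  have ht2 : t * (2 * (|Q| + 1)) ≤ L := (le_div_iff₀ hQ1).mp htle
  have h2 := h t ht0 ht1
  have hQabs : -|Q| ≤ Q := neg_abs_le Q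
  have habs : (0:ℝ) ≤ |Q| := abs_nonneg Q
  nlinarith [mul_pos ht0 hL, mul_le_mul_of_nonneg_left ht2 ht0.le, sq_nonneg t]

theorem stmt0 {d N : ℕ} (A : Matrix (Fin d) (Fin N) ℝ) (y : Fin d → ℝ)
    (lam : ℝ) (hlam : 0 < lam) (T : Finset (Fin N)) (xstar : Fin N → ℝ)
    (hsupp : ∀ i ∉ T, xstar i = 0)
    (hopt : ∀ x : Fin N → ℝ, (∀ i ∉ T, x i = 0) →
      (1/2) * ∑ j, (y j - A.mulVec xstar j)^2 + lam * ∑ i, |xstar i| ≤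
      (1/2) * ∑ j, (y j - A.mulVec x j)^2 + lam * ∑ i, |x i|)
    (hdual : ∀ i ∉ T, |∑ j, A j i * (y j - A.mulVec xstar j)| < lam)
    (xhat : Fin N → ℝ)
    (hxhat : ∀ x : Fin N → ℝ,
      (1/2) * ∑ j, (y j - A.mulVec xhat j)^2 + lam * ∑ i, |xhat i| ≤
      (1/2) * ∑ j, (y j - A.mulVec x j)^2 + lam * ∑ i, |x i|) :
    ∀ i ∉ T, xhat i = 0 := by
  classical
  intro i0 hi0
  -- residual, correlations, off-support and on-support parts of the difference
  set r : Fin d → ℝ := fun j => y j - A.mulVec xstar j with hrdef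
  set c : Fin N → ℝ := fun i => ∑ j, A j i * r j with hcdef
  set v : Fin N → ℝ := fun i => if i ∈ T then 0 else xhat i with hvdef
  set m : Fin N → ℝ := fun i => if i ∈ T then xhat i - xstar i else 0 with hmdef
  set g : Fin d → ℝ := fun j => ∑ i, A j i * v i with hgdef
  set e : Fin d → ℝ := fun j => ∑ i, A j i * m i with hedef
  have hr : ∀ j, r j = y j - A.mulVec xstar j := fun j => by rw [hrdef]
  have hcd : ∀ i ∉ T, |c i| < lam := by
    intro i hi
    have := hdual i hi
    simpa [hcdef, hrdef] using this
  have hvm : ∀ i, v i + m i = xhat i - xstar i := by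
    intro i
    by_cases hi : i ∈ T
    · simp [hvdef, hmdef, hi]
    · simp [hvdef, hmdef, hi, hsupp i hi]
  -- the key inequality for small positive t
  have key : ∀ t : ℝ, 0 < t → t < 1 →
      t * (2 * (lam * ∑ i, |v i| - ∑ i, v i * c i)) +
        t^2 * (∑ j, (2 * (e j * g j) + g j ^ 2)) ≤ 0 := by
    intro t ht0 ht1
    set w : Fin N → ℝ := fun i => xstar i + t * (xhat i - xstar i) with hwdef
    set p : Fin N → ℝ := fun i => xstar i + t * m i with hpdef
    have hpsupp : ∀ i ∉ T, p i = 0 := by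
      intro i hi
      simp [hpdef, hmdef, hi, hsupp i hi]
    -- linear algebra: A w = A x* + t (e + g), A p = A x* + t e
    have hmw : ∀ j, A.mulVec w j = A.mulVec xstar j + t * (e j + g j) := by
      intro j
      simp only [Matrix.mulVec, dotProduct, hwdef, hedef, hgdef]
      rw [mul_add, Finset.mul_sum, Finset.mul_sum, ← Finset.sum_add_distrib,
        ← Finset.sum_add_distrib]
      refine Finset.sum_congr rfl fun i _ => ?_
      have h := hvm i
      linear_combination A j i * t * h.symm
    have hmp : ∀ j, A.mulVec p j = A.mulVec xstar j + t * e j := by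
      intro j
      simp only [Matrix.mulVec, dotProduct, hpdef, hedef]
      rw [Finset.mul_sum, ← Finset.sum_add_distrib]
      exact Finset.sum_congr rfl fun i _ => by ring
    have hq1 : ∀ j, y j - A.mulVec w j = r j - t * (e j + g j) := by
      intro j; rw [hmw j, hr j]; ring
    have hq2 : ∀ j, y j - A.mulVec p j = r j - t * e j := by
      intro j; rw [hmp j, hr j]; ring
    -- convexity: F w ≤ (1-t) F x* + t F xhat
    have hconv : (1/2) * ∑ j, (y j - A.mulVec w j)^2 + lam * ∑ i, |w i| ≤
        (1-t) * ((1/2) * ∑ j, (y j - A.mulVec xstar j)^2 + lam * ∑ i, |xstar i|)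
        + t * ((1/2) * ∑ j, (y j - A.mulVec xhat j)^2 + lam * ∑ i, |xhat i|) := by
      have hAw : ∀ j, y j - A.mulVec w j
          = (1-t) * (y j - A.mulVec xstar j) + t * (y j - A.mulVec xhat j) := by
        intro j
        have h : A.mulVec w j = (1-t) * A.mulVec xstar j + t * A.mulVec xhat j := by
          simp only [Matrix.mulVec, dotProduct, hwdef]
          rw [Finset.mul_sum, Finset.mul_sum, ← Finset.sum_add_distrib]
          exact Finset.sum_congr rfl fun i _ => by ring
        rw [h]; ring
      have hquadconv : ∑ j, (y j - A.mulVec w j)^2 ≤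
          (1-t) * ∑ j, (y j - A.mulVec xstar j)^2 + t * ∑ j, (y j - A.mulVec xhat j)^2 := by
        rw [Finset.mul_sum, Finset.mul_sum, ← Finset.sum_add_distrib]
        refine Finset.sum_le_sum fun j _ => ?_
        rw [hAw j]
        nlinarith [sq_nonneg ((y j - A.mulVec xstar j) - (y j - A.mulVec xhat j)),
          mul_pos ht0 (by linarith : (0:ℝ) < 1 - t)]
      have habsconv : ∑ i, |w i| ≤ (1-t) * ∑ i, |xstar i| + t * ∑ i, |xhat i| := by
        rw [Finset.mul_sum, Finset.mul_sum, ← Finset.sum_add_distrib]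
        refine Finset.sum_le_sum fun i _ => ?_
        have h : w i = (1-t) * xstar i + t * xhat i := by rw [hwdef]; ring
        rw [h]
        calc |(1-t) * xstar i + t * xhat i| ≤ |(1-t) * xstar i| + |t * xhat i| :=
              abs_add_le _ _
          _ = (1-t) * |xstar i| + t * |xhat i| := by
              rw [abs_mul, abs_mul, abs_of_pos ht0, abs_of_pos (by linarith : (0:ℝ) < 1 - t)]
      nlinarith [mul_le_mul_of_nonneg_left habsconv hlam.le]
    have hFle : (1/2) * ∑ j, (y j - A.mulVec w j)^2 + lam * ∑ i, |w i| ≤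
        (1/2) * ∑ j, (y j - A.mulVec p j)^2 + lam * ∑ i, |p i| := by
      have h1 := hxhat xstar
      have h2 := hopt p hpsupp
      nlinarith [mul_le_mul_of_nonneg_left h1 ht0.le]
    -- expand the quadratic difference
    have hsw : ∑ j, (y j - A.mulVec w j)^2 = ∑ j, (r j - t * (e j + g j))^2 :=
      Finset.sum_congr rfl fun j _ => by rw [hq1 j]
    have hsp : ∑ j, (y j - A.mulVec p j)^2 = ∑ j, (r j - t * e j)^2 :=
      Finset.sum_congr rfl fun j _ => by rw [hq2 j]
    have hquad : ∑ j, (r j - t * (e j + g j))^2 - ∑ j, (r j - t * e j)^2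
        = -(2*t) * (∑ j, g j * r j) + t^2 * (∑ j, (2 * (e j * g j) + g j ^ 2)) := by
      rw [← Finset.sum_sub_distrib, Finset.mul_sum, Finset.mul_sum, ← Finset.sum_add_distrib]
      exact Finset.sum_congr rfl fun j _ => by ring
    -- swap the double sum
    have hswap : ∑ j, g j * r j = ∑ i, v i * c i := by
      simp only [hgdef, hcdef]
      calc ∑ j, (∑ i, A j i * v i) * r j
          = ∑ j, ∑ i, v i * (A j i * r j) := by
            refine Finset.sum_congr rfl fun j _ => ?_
            rw [Finset.sum_mul]
            exact Finset.sum_congr rfl fun i _ => by ring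
        _ = ∑ i, ∑ j, v i * (A j i * r j) := Finset.sum_comm
        _ = ∑ i, v i * ∑ j, A j i * r j := by
            exact Finset.sum_congr rfl fun i _ => by rw [Finset.mul_sum]
    -- the ℓ¹ difference
    have hl1 : ∑ i, |w i| - ∑ i, |p i| = t * ∑ i, |v i| := by
      rw [← Finset.sum_sub_distrib, Finset.mul_sum]
      refine Finset.sum_congr rfl fun i _ => ?_
      by_cases hi : i ∈ T
      · simp only [hwdef, hpdef, hvdef, hmdef, if_pos hi]
        simp
      · have h0 := hsupp i hi
        simp only [hwdef, hpdef, hvdef, hmdef, if_neg hi, h0]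
        rw [mul_zero, add_zero, zero_add, abs_zero, sub_zero, sub_zero, abs_mul,
          abs_of_pos ht0]
    rw [hsw, hsp] at hFle
    nlinarith [hFle, hquad, hswap, hl1]
  -- take t → 0
  have hL : 2 * (lam * ∑ i, |v i| - ∑ i, v i * c i) ≤ 0 :=
    stmt0_aux_limit _ _ key
  -- each term of the sum is nonnegative
  have hterm : ∀ i, 0 ≤ lam * |v i| - v i * c i := by
    intro i
    by_cases hi : i ∈ T
    · simp [hvdef, hi]
    · have hci := hcd i hi
      have h1 : v i * c i ≤ |v i| * |c i| := by
        calc v i * c i ≤ |v i * c i| := le_abs_self _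
          _ = |v i| * |c i| := abs_mul _ _
      nlinarith [abs_nonneg (v i), abs_nonneg (c i)]
  have hsum : ∑ i, (lam * |v i| - v i * c i) ≤ 0 := by
    rw [Finset.sum_sub_distrib, ← Finset.mul_sum]
    linarith
  have h1 : lam * |v i0| - v i0 * c i0 ≤ 0 := by
    have h2 : lam * |v i0| - v i0 * c i0 ≤ ∑ x, (lam * |v x| - v x * c x) :=
      Finset.single_le_sum (f := fun i => lam * |v i| - v i * c i)
        (fun i _ => hterm i) (Finset.mem_univ i0)
    linarith
  have hv0 : v i0 = xhat i0 := by simp [hvdef, hi0]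
  have hci0 := hcd i0 hi0
  rw [hv0] at h1
  have h3 : xhat i0 * c i0 ≤ |xhat i0| * |c i0| := by
    calc xhat i0 * c i0 ≤ |xhat i0 * c i0| := le_abs_self _
      _ = |xhat i0| * |c i0| := abs_mul _ _
  have h4 : (lam - |c i0|) * |xhat i0| ≤ 0 := by nlinarith
  have h5 : 0 < lam - |c i0| := by linarith
  have h6 : |xhat i0| ≤ 0 := by nlinarith [abs_nonneg (xhat i0)]
  exact abs_eq_zero.mp (le_antisymm h6 (abs_nonneg _))
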